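/- Let G be a locally finite group and K a normal subgroup such that G/K is a countable p-group for a prime p. Then there exists a p-subgroup P of G with G = KP. -/
import Mathlib

open Subgroup

/-- Key step: enlarge a finite p-subgroup to cover one more coset. -/
lemma step_13 {G : Type*} [Group G]
    (hlf : ∀ S : Finset G, Finite (Subgroup.closure (S : Set G)))
    (K : Subgroup G) [K.Normal] (p : ℕ) (hp : p.Prime)
    (hpq : IsPGroup p (G ⧸ K)) (P₀ : Subgroup G) (h1 : IsPGroup p P₀)
    (h2 : Finite P₀) (g : G) :
    ∃ Q : Subgroup G, P₀ ≤ Q ∧ IsPGroup p Q ∧ Finite Q ∧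
      ∃ k ∈ K, ∃ x ∈ Q, g = k * x := by
  haveI : Fact p.Prime := ⟨hp⟩
  have hsfin : (insert g (P₀ : Set G)).Finite := (Set.toFinite _).insert g
  set H : Subgroup G := Subgroup.closure (insert g (P₀ : Set G)) with hH
  haveI hHfin : Finite H := by
    have := hlf hsfin.toFinset
    rwa [hsfin.coe_toFinset] at this
  have hP₀H : P₀ ≤ H := fun x hx =>
    Subgroup.subset_closure (Set.mem_insert_of_mem _ hx)
  have hgH : g ∈ H := Subgroup.subset_closure (Set.mem_insert _ _)
  set φ : H →* G ⧸ K := (QuotientGroup.mk' K).comp H.subtype with hφ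
  -- Sylow of H containing P₀
  have hP₀' : IsPGroup p (P₀.subgroupOf H) :=
    h1.comap_of_injective H.subtype Subtype.coe_injective
  obtain ⟨Q, hQ⟩ := hP₀'.exists_le_sylow
  set N : Subgroup H := φ.ker with hN
  -- N has p-power index
  have hquot : IsPGroup p (H ⧸ N) :=
    hpq.of_injective (QuotientGroup.kerLift φ) (QuotientGroup.kerLift_injective φ)
  obtain ⟨n, hn⟩ := hquot.exists_card_eq
  have hNindex : N.index = p ^ n := by
    rw [Subgroup.index, hn]
  -- Q ⊔ N = ⊤
  have hdvd1 : ((Q : Subgroup H) ⊔ N).index ∣ p ^ n :=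
    hNindex ▸ Subgroup.index_dvd_of_le le_sup_right
  have hdvd2 : ((Q : Subgroup H) ⊔ N).index ∣ (Q : Subgroup H).index :=
    Subgroup.index_dvd_of_le le_sup_left
  have hnd : ¬ p ∣ ((Q : Subgroup H) ⊔ N).index := fun h =>
    Q.not_dvd_index (h.trans hdvd2)
  have htop : (Q : Subgroup H) ⊔ N = ⊤ := by
    rw [← Subgroup.index_eq_one]
    obtain ⟨j, hj, hje⟩ := (Nat.dvd_prime_pow hp).mp hdvd1
    rcases Nat.eq_zero_or_pos j with h0 | h0
    · simp [hje, h0]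
    · exact absurd (hje ▸ dvd_pow_self p h0.ne') hnd
  -- decompose g
  have hgmem : (⟨g, hgH⟩ : H) ∈ ((Q : Subgroup H) ⊔ N : Subgroup H) := htop ▸ Subgroup.mem_top _
  rw [← SetLike.mem_coe, Subgroup.mul_normal] at hgmem
  obtain ⟨q, hq, nn, hnn, hqn⟩ := hgmem
  refine ⟨(Q : Subgroup H).map H.subtype, ?_, ?_, ?_, ?_⟩
  · intro x hx
    exact ⟨⟨x, hP₀H hx⟩, hQ hx, rfl⟩
  · exact Q.2.map H.subtype
  · have : ((Q : Subgroup H).map H.subtype : Set G) ⊆ (H : Set G) := by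
      rintro x ⟨y, hy, rfl⟩; exact y.2
    have hfin : (((Q : Subgroup H).map H.subtype : Subgroup G) : Set G).Finite :=
      (Set.toFinite (H : Set G)).subset this
    exact hfin
  · -- g = k * x
    have hnK : (nn : G) ∈ K := by
      have : φ nn = 1 := hnn
      simpa [hφ, QuotientGroup.eq_one_iff] using this
    have hgeq : g = (q : G) * (nn : G) := by
      have := congrArg (Subtype.val : H → G) hqn
      simpa using this.symm
    refine ⟨(q : G) * (nn : G) * (q : G)⁻¹, ‹K.Normal›.conj_mem _ hnK _, (q : G), ⟨q, hq, rfl⟩, ?_⟩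
    rw [hgeq]; group

/-- Auxiliary recursion. -/
noncomputable def chain13 {α : Type*} (a : α) (next : ℕ → α → α) : ℕ → α
  | 0 => a
  | n + 1 => next n (chain13 a next n)

theorem stmt_13 {G : Type*} [Group G]
    (hlf : ∀ S : Finset G, Finite (Subgroup.closure (S : Set G)))
    (K : Subgroup G) [K.Normal] (p : ℕ) (hp : p.Prime)
    [Countable (G ⧸ K)] (hpq : IsPGroup p (G ⧸ K)) :
    ∃ P : Subgroup G, IsPGroup p P ∧ ∀ g : G, ∃ k ∈ K, ∃ x ∈ P, g = k * x := by
  obtain ⟨f, hf⟩ := exists_surjective_nat (G ⧸ K)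
  have key : ∀ (P₀ : Subgroup G), IsPGroup p P₀ → Finite P₀ → ∀ g : G,
      ∃ Q : Subgroup G, P₀ ≤ Q ∧ IsPGroup p Q ∧ Finite Q ∧
        ∃ k ∈ K, ∃ x ∈ Q, g = k * x := step_13 hlf K p hp hpq
  set next : ℕ → {Q : Subgroup G // IsPGroup p Q ∧ Finite Q} →
      {Q : Subgroup G // IsPGroup p Q ∧ Finite Q} := fun n prev =>
    ⟨(key prev.1 prev.2.1 prev.2.2 (f n).out).choose,
      (key prev.1 prev.2.1 prev.2.2 (f n).out).choose_spec.2.1,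
      (key prev.1 prev.2.1 prev.2.2 (f n).out).choose_spec.2.2.1⟩ with hnext
  set chain : ℕ → {Q : Subgroup G // IsPGroup p Q ∧ Finite Q} :=
    chain13 ⟨⊥, IsPGroup.of_bot, inferInstance⟩ next with hchain
  have hsucc : ∀ n, chain (n + 1) = next n (chain n) := fun n => rfl
  have hle : ∀ n, (chain n).1 ≤ (chain (n + 1)).1 := by
    intro n
    rw [hsucc n, hnext]
    exact (key (chain n).1 (chain n).2.1 (chain n).2.2 (f n).out).choose_spec.1
  have hmono : Monotone fun n => (chain n).1 := monotone_nat_of_le_succ hle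
  have hdir : Directed (· ≤ ·) fun n => (chain n).1 := hmono.directed_le
  refine ⟨⨆ n, (chain n).1, ?_, ?_⟩
  · intro x
    obtain ⟨n, hn⟩ := (Subgroup.mem_iSup_of_directed hdir).mp x.2
    obtain ⟨k, hk⟩ := (chain n).2.1 ⟨x.1, hn⟩
    refine ⟨k, ?_⟩
    have := congrArg (Subtype.val) hk
    ext
    simpa using this
  · intro g
    obtain ⟨n, hn⟩ := hf ((g : G) : G ⧸ K)
    have hspec := (key (chain n).1 (chain n).2.1 (chain n).2.2 (f n).out).choose_spec.2.2.2
    obtain ⟨k, hk, x, hx, hgx⟩ := hspec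
    have hxmem : x ∈ (chain (n + 1)).1 := by rw [hsucc n, hnext]; exact hx
    have houtn : (((f n).out : G) : G ⧸ K) = (g : G ⧸ K) := by
      rw [QuotientGroup.out_eq', hn]
    have hkey : g * ((f n).out)⁻¹ ∈ K :=
      ‹K.Normal›.mem_comm (QuotientGroup.eq.mp houtn)
    refine ⟨g * ((f n).out)⁻¹ * k, mul_mem hkey hk, x,
      Subgroup.mem_iSup_of_mem (n + 1) hxmem, ?_⟩
    rw [mul_assoc, ← hgx]; group
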